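/- Let S be a primitive Hausdorff pseudocompact topological inverse semigroup, topologically isomorphic to the orthogonal sum ∑_{i∈I} B_{λ_i}(G_i) of topological Brandt λ_i-extensions of topological groups G_i. Then the space S is Tychonoff if and only if for every i ∈ I the underlying space of the topological group G_i is Tychonoff (equivalently, G_i is a T₀-space). -/

import Mathlib

open Topology

/-- A (Hausdorff) topological space is *pseudocompact* if every locally finite
family of non-empty open subsets is finite. -/
def IsPseudocompact (X : Type*) [TopologicalSpace X] : Prop :=
  ∀ 𝒰 : Set (Set X), (∀ U ∈ 𝒰, IsOpen U ∧ U.Nonempty) →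
    LocallyFinite (fun U : 𝒰 => (U : Set X)) → 𝒰.Finite

/-- `inv` witnesses that the semigroup `S` is an *inverse semigroup*:
for every `x`, `inv x` is the unique `y` with `x*y*x = x` and `y*x*y = y`. -/
structure IsInverseSemigroup (S : Type*) [Mul S] (inv : S → S) : Prop where
  mul_inv_mul : ∀ x : S, x * inv x * x = x
  inv_mul_inv : ∀ x : S, inv x * x * inv x = inv x
  inv_unique : ∀ x y : S, x * y * x = x → y * x * y = y → y = inv x

/-- A semigroup with zero is *primitive* when every non-zero idempotent is
minimal among non-zero idempotents for the natural partial order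
`f ≤ e ↔ f*e = e*f = f`. -/
def IsPrimitiveInverse (S : Type*) [Mul S] [Zero S] : Prop :=
  ∀ e f : S, IsIdempotentElem e → e ≠ 0 → IsIdempotentElem f → f ≠ 0 →
    f * e = f → e * f = f → f = e

/-- The orthogonal sum of the family of Brandt extensions `B_{λ i}(G i)`:
the set `{0} ∪ ⋃ i, (λ i × G i × λ i)`. -/
abbrev OrthSum (I : Type*) (ι : I → Type*) (G : I → Type*) : Type _ :=
  Option (Σ i : I, ι i × G i × ι i)

instance (I : Type*) (ι : I → Type*) (G : I → Type*) : Zero (OrthSum I ι G) :=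
  ⟨(none : Option (Σ i : I, ι i × G i × ι i))⟩

/-- The non-zero element `(α, g, β)` of the summand `B_{λ i}(G i)`. -/
def OrthSum.elem {I : Type*} {ι : I → Type*} {G : I → Type*}
    (i : I) (α : ι i) (g : G i) (β : ι i) : OrthSum I ι G :=
  some ⟨i, (α, g, β)⟩

open Classical in
/-- Multiplication of the orthogonal sum: products are computed inside the
summand `B_{λ i}(G i)` when both factors lie in it, and are `0` otherwise. -/
noncomputable instance (I : Type*) (ι : I → Type*) (G : I → Type*) [∀ i, Mul (G i)] :
    Mul (OrthSum I ι G) :=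
  ⟨fun x y =>
    match x, y with
    | some ⟨i, (α, a, β)⟩, some ⟨j, (γ, b, δ)⟩ =>
        if h : i = j then
          (if cast (congrArg ι h) β = γ then
            (some ⟨j, (cast (congrArg ι h) α, (cast (congrArg G h) a) * b, δ)⟩ :
              Option (Σ i : I, ι i × G i × ι i))
          else none)
        else none
    | _, _ => none⟩

/-- A witness that the topological semigroup `S` with zero is topologically
isomorphic to the orthogonal sum of a family of topological Brandt
`λ i`-extensions `B_{λ i}(G i)` of topological groups `G i` (in the category of
topological inverse semigroups): an isomorphism of semigroups with zero which
is a homeomorphism, such that each subset `(G i)_{α,β}` of `S` carries the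
topology of the group `G i`. -/
structure TopBrandtDecomposition (S : Type*) [Mul S] [Zero S] [TopologicalSpace S] where
  I : Type*
  ι : I → Type*
  G : I → Type*
  [instNonempty : ∀ i, Nonempty (ι i)]
  [instGroup : ∀ i, Group (G i)]
  [instTopG : ∀ i, TopologicalSpace (G i)]
  [instTopGrpG : ∀ i, IsTopologicalGroup (G i)]
  [instTopSum : TopologicalSpace (OrthSum I ι G)]
  e : S ≃ₜ OrthSum I ι G
  map_mul : ∀ x y : S, e (x * y) = e x * e y
  map_zero : e 0 = 0
  embed : ∀ (i : I) (α β : ι i),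
    Topology.IsEmbedding fun g : G i => e.symm (OrthSum.elem i α g β)

set_option linter.unusedSectionVars false

namespace OrthAux
open Topology Filter Set Pointwise unitInterval

section GroupCR

/-- In a uniform space with countably generated uniformity, a point can be functionally
separated from the complement of any of its neighbourhoods. -/
lemma exists_sep_fun_of_uniform {X : Type*} [u : UniformSpace X]
    [(uniformity X).IsCountablyGenerated] {x : X} {W : Set X} (hW : W ∈ 𝓝 x) :
    ∃ f : X → ℝ, Continuous f ∧ f x = 0 ∧ (∀ y, y ∉ W → f y = 1) ∧
      ∀ y, f y ∈ Set.Icc (0 : ℝ) 1 := by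
  letI := UniformSpace.pseudoMetricSpace X
  obtain ⟨ε, hε, hball⟩ := Metric.mem_nhds_iff.1 hW
  refine ⟨fun y => min 1 (ε⁻¹ * dist x y), ?_, by simp, ?_, ?_⟩
  · exact continuous_const.min (continuous_const.mul (continuous_const.dist continuous_id))
  · intro y hy
    have hdist : ε ≤ dist x y := by
      by_contra h
      push_neg at h
      exact hy (hball (by simpa [Metric.mem_ball, dist_comm] using h))
    have h1 : (1 : ℝ) ≤ ε⁻¹ * dist x y := by
      have h2 := mul_le_mul_of_nonneg_left hdist (le_of_lt (inv_pos.2 hε))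
      rwa [inv_mul_cancel₀ (ne_of_gt hε)] at h2
    exact min_eq_left h1
  · intro y
    refine ⟨?_, min_le_left _ _⟩
    have := dist_nonneg (x := x) (y := y)
    positivity

variable {G : Type*} [Group G] [TopologicalSpace G] [IsTopologicalGroup G]

structure GoodNhd (G : Type*) [Group G] [TopologicalSpace G] : Type _ where
  carrier : Set G
  isOpen : IsOpen carrier
  one_mem : (1 : G) ∈ carrier
  inv_mem : ∀ x ∈ carrier, x⁻¹ ∈ carrier

lemma exists_good_sq {W : Set G} (hW : IsOpen W) (h1 : (1 : G) ∈ W) :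
    ∃ V : GoodNhd G, V.carrier * V.carrier ⊆ W := by
  obtain ⟨V₁, hV₁o, hV₁1, hV₁sq⟩ := exists_open_nhds_one_mul_subset (hW.mem_nhds h1)
  refine ⟨⟨V₁ ∩ (fun x : G => x⁻¹) ⁻¹' V₁, hV₁o.inter (hV₁o.preimage continuous_inv),
    ⟨hV₁1, by simpa using hV₁1⟩, ?_⟩, ?_⟩
  · rintro x ⟨hx1, hx2⟩
    exact ⟨hx2, by simpa using hx1⟩
  · exact (Set.mul_subset_mul inter_subset_left inter_subset_left).trans hV₁sq

lemma GoodNhd.subset_of_sq {V : GoodNhd G} {W : Set G}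
    (h : V.carrier * V.carrier ⊆ W) : V.carrier ⊆ W := by
  intro x hx
  have : x * 1 ∈ V.carrier * V.carrier := Set.mul_mem_mul hx V.one_mem
  simpa using h this

/-- The key separation lemma: in a topological group, `1` can be separated from the
complement of any of its neighbourhoods by a continuous `[0,1]`-valued function. -/
lemma exists_sep_fun {U : Set G} (hU : U ∈ 𝓝 1) :
    ∃ f : G → ℝ, Continuous f ∧ f 1 = 0 ∧ (∀ y, y ∉ U → f y = 1) ∧
      ∀ y, f y ∈ Set.Icc (0 : ℝ) 1 := by
  have hstep : ∀ V : GoodNhd G, ∃ W : GoodNhd G, W.carrier * W.carrier ⊆ V.carrier :=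
    fun V => exists_good_sq V.isOpen V.one_mem
  obtain ⟨V₀, hV₀⟩ := exists_good_sq isOpen_interior (mem_interior_iff_mem_nhds.2 hU)
  have hV₀U : V₀.carrier ⊆ U := (GoodNhd.subset_of_sq hV₀).trans interior_subset
  let next : GoodNhd G → GoodNhd G := fun V => (hstep V).choose
  have hnext : ∀ V : GoodNhd G, (next V).carrier * (next V).carrier ⊆ V.carrier :=
    fun V => (hstep V).choose_spec
  let seq : ℕ → GoodNhd G := fun n => next^[n] V₀
  have hseqsucc : ∀ n, seq (n + 1) = next (seq n) := fun n =>
    Function.iterate_succ_apply' next n V₀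
  have hseq : ∀ n, (seq (n + 1)).carrier * (seq (n + 1)).carrier ⊆ (seq n).carrier := by
    intro n
    rw [hseqsucc n]
    exact hnext (seq n)
  have hVsub : ∀ n, (seq (n + 1)).carrier ⊆ (seq n).carrier :=
    fun n => GoodNhd.subset_of_sq (hseq n)
  have hVanti : Antitone (fun n => (seq n).carrier) := antitone_nat_of_succ_le hVsub
  -- entourages
  let D : ℕ → Set (G × G) := fun n => {p : G × G | p.2 * p.1⁻¹ ∈ (seq n).carrier}
  have hDanti : Antitone D := fun m n h p hp => hVanti h hp
  let B : FilterBasis (G × G) :=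
    { sets := Set.range D
      nonempty := ⟨D 0, Set.mem_range_self 0⟩
      inter_sets := by
        rintro _ _ ⟨m, rfl⟩ ⟨n, rfl⟩
        exact ⟨D (max m n), Set.mem_range_self _,
          Set.subset_inter (hDanti (le_max_left m n)) (hDanti (le_max_right m n))⟩ }
  let core : UniformSpace.Core G := UniformSpace.Core.mkOfBasis B
    (by rintro _ ⟨n, rfl⟩ x; show x * x⁻¹ ∈ (seq n).carrier; simpa using (seq n).one_mem)
    (by
      rintro _ ⟨n, rfl⟩
      refine ⟨D n, Set.mem_range_self n, fun p hp => ?_⟩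
      show p.1 * p.2⁻¹ ∈ (seq n).carrier
      have := (seq n).inv_mem _ hp
      simpa [mul_inv_rev] using this)
    (by
      rintro _ ⟨n, rfl⟩
      refine ⟨D (n + 1), Set.mem_range_self _, ?_⟩
      rintro ⟨x, z⟩ ⟨y, hxy, hyz⟩
      show z * x⁻¹ ∈ (seq n).carrier
      have heq : (z * y⁻¹) * (y * x⁻¹) = z * x⁻¹ := by group
      rw [← heq]
      exact hseq n (Set.mul_mem_mul hyz hxy))
  have hbasis : core.uniformity.HasBasis (fun _ : ℕ => True) D := by
    have h1 : core.uniformity = B.filter := rfl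
    rw [h1, Filter.hasBasis_iff]
    intro t
    rw [B.hasBasis.mem_iff]
    constructor
    · rintro ⟨_, ⟨n, rfl⟩, ht⟩; exact ⟨n, trivial, ht⟩
    · rintro ⟨n, -, ht⟩; exact ⟨D n, Set.mem_range_self n, ht⟩
  have hcg : (@uniformity G (UniformSpace.ofCore core)).IsCountablyGenerated :=
    hbasis.isCountablyGenerated
  -- id : (G, τ) → (G, τ') is continuous
  have hle : @Continuous G G _ ((UniformSpace.ofCore core).toTopologicalSpace) id := by
    rw [@continuous_iff_continuousAt _ _ _ ((UniformSpace.ofCore core).toTopologicalSpace)]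
    intro x
    show Filter.Tendsto id (𝓝 x) (@nhds G ((UniformSpace.ofCore core).toTopologicalSpace) x)
    have hnx : @nhds G ((UniformSpace.ofCore core).toTopologicalSpace) x
        = Filter.comap (Prod.mk x) core.uniformity := core.nhds_toTopologicalSpace x
    rw [hnx, Filter.tendsto_comap_iff, hbasis.tendsto_right_iff]
    intro n _
    have hmem : {y : G | y * x⁻¹ ∈ (seq n).carrier} ∈ 𝓝 x := by
      refine IsOpen.mem_nhds ((seq n).isOpen.preimage (continuous_id.mul continuous_const)) ?_
      show x * x⁻¹ ∈ (seq n).carrier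
      simpa using (seq n).one_mem
    exact Filter.eventually_of_mem hmem (fun y hy => hy)
  -- V 0 is a τ'-neighbourhood of 1
  have hV0nhds : (seq 0).carrier ∈ @nhds G ((UniformSpace.ofCore core).toTopologicalSpace) 1 := by
    have hnx : @nhds G ((UniformSpace.ofCore core).toTopologicalSpace) 1
        = Filter.comap (Prod.mk 1) core.uniformity := core.nhds_toTopologicalSpace 1
    rw [hnx]
    refine Filter.mem_comap.2 ⟨D 0, hbasis.mem_of_mem trivial, ?_⟩
    intro y hy
    have : y * (1 : G)⁻¹ ∈ (seq 0).carrier := hy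
    simpa using this
  obtain ⟨f, hfc, hfx, hfW, hfI⟩ :=
    @exists_sep_fun_of_uniform G (UniformSpace.ofCore core) hcg 1 (seq 0).carrier hV0nhds
  refine ⟨f, ?_, hfx, ?_, hfI⟩
  · exact (@Continuous.comp G G ℝ _ ((UniformSpace.ofCore core).toTopologicalSpace) _ id f
      hfc hle : _)
  · intro y hy
    exact hfW y (fun h => hy (hV₀U h))

/-- Every topological group is completely regular. -/
theorem TopologicalGroup.completelyRegularSpace (G : Type*) [Group G] [TopologicalSpace G]
    [IsTopologicalGroup G] : CompletelyRegularSpace G := by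
  constructor
  intro x K hK hxK
  have hU : {y : G | y * x ∈ Kᶜ} ∈ 𝓝 1 := by
    refine IsOpen.mem_nhds (hK.isOpen_compl.preimage (continuous_id.mul continuous_const)) ?_
    simpa using hxK
  obtain ⟨f, hfc, hf1, hfK, hfI⟩ := exists_sep_fun hU
  refine ⟨fun y => ⟨f (y * x⁻¹), hfI _⟩, ?_, ?_, ?_⟩
  · exact (hfc.comp (continuous_id.mul continuous_const)).subtype_mk _
  · apply Subtype.ext
    show f (x * x⁻¹) = 0
    simpa using hf1
  · intro y hy
    apply Subtype.ext
    show f (y * x⁻¹) = 1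
    apply hfK
    simp only [Set.mem_setOf_eq, Set.mem_compl_iff, not_not]
    simpa using hy

end GroupCR
end OrthAux

open Topology Filter Set

namespace OrthAux

section Alg

variable {J : Type*} {ι : J → Type*} {G : J → Type*} [∀ i, Mul (G i)]

lemma mul_same (i : J) (α β δ : ι i) (a b : G i) :
    (OrthSum.elem i α a β : OrthSum J ι G) * OrthSum.elem i β b δ =
      OrthSum.elem i α (a * b) δ := by
  classical
  show (if h : i = i then
          (if cast (congrArg ι h) β = β then
            (some ⟨i, (cast (congrArg ι h) α, (cast (congrArg G h) a) * b, δ)⟩ :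
              Option (Σ i : J, ι i × G i × ι i))
          else none)
        else none) = _
  simp [OrthSum.elem]

lemma mul_mismatch (i : J) (α β γ δ : ι i) (a b : G i) (h : β ≠ γ) :
    (OrthSum.elem i α a β : OrthSum J ι G) * OrthSum.elem i γ b δ = 0 := by
  classical
  show (if hh : i = i then
          (if cast (congrArg ι hh) β = γ then
            (some ⟨i, (cast (congrArg ι hh) α, (cast (congrArg G hh) a) * b, δ)⟩ :
              Option (Σ i : J, ι i × G i × ι i))
          else none)
        else none) = _
  rw [dif_pos rfl]
  exact (if_neg (fun hc => h hc)).trans rfl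

lemma mul_mismatch' {i j : J} (h : i ≠ j) (α β : ι i) (γ δ : ι j) (a : G i) (b : G j) :
    (OrthSum.elem i α a β : OrthSum J ι G) * OrthSum.elem j γ b δ = 0 := by
  classical
  show (if hh : i = j then
          (if cast (congrArg ι hh) β = γ then
            (some ⟨j, (cast (congrArg ι hh) α, (cast (congrArg G hh) a) * b, δ)⟩ :
              Option (Σ i : J, ι i × G i × ι i))
          else none)
        else none) = _
  rw [dif_neg h]
  rfl

lemma elem_ne_zero (i : J) (α : ι i) (g : G i) (β : ι i) :
    (OrthSum.elem i α g β : OrthSum J ι G) ≠ 0 :=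
  fun h => Option.some_ne_none _ h

lemma elem_inj {i j : J} {α β : ι i} {γ δ : ι j} {g : G i} {h : G j}
    (hEq : (OrthSum.elem i α g β : OrthSum J ι G) = OrthSum.elem j γ h δ) :
    (⟨i, (α, β)⟩ : Σ k : J, ι k × ι k) = ⟨j, (γ, δ)⟩ := by
  simp only [OrthSum.elem] at hEq
  injection hEq with h1
  injection h1 with hij hrest
  subst hij
  rw [heq_iff_eq] at hrest
  injection hrest with h2 h3
  injection h3 with h4 h5
  subst h2; subst h5
  rfl

end Alg

section Main

variable {S : Type*} [SemigroupWithZero S] [TopologicalSpace S] [T2Space S]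
variable {J : Type*} {ι : J → Type*} {G : J → Type*}
variable [∀ i, Group (G i)] [∀ i, TopologicalSpace (G i)] [∀ i, IsTopologicalGroup (G i)]
variable [TopologicalSpace (OrthSum J ι G)]

/-- The canonical copy of `g` in `S`. -/
def lMap (e : S ≃ₜ OrthSum J ι G) (i : J) (α β : ι i) : G i → S :=
  fun g => e.symm (OrthSum.elem i α g β)

/-- The layer (non-zero `H`-class) of index `p` inside `S`. -/
def layer (e : S ≃ₜ OrthSum J ι G) (p : Σ i : J, ι i × ι i) : Set S :=
  Set.range (lMap e p.1 p.2.1 p.2.2)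

variable (e : S ≃ₜ OrthSum J ι G)

lemma symm_zero (hzero : e 0 = 0) : e.symm 0 = 0 := by
  conv_lhs => rw [← hzero]
  exact e.symm_apply_apply 0

lemma lMap_ne_zero (hzero : e 0 = 0) (i : J) (α β : ι i) (g : G i) :
    lMap e i α β g ≠ 0 := by
  intro h
  have h2 := congrArg e h
  rw [hzero] at h2
  rw [lMap, e.apply_symm_apply] at h2
  exact elem_ne_zero i α g β h2

lemma zero_not_mem_layer (hzero : e 0 = 0) (p : Σ i : J, ι i × ι i) :
    (0 : S) ∉ layer e p := by
  rintro ⟨g, hg⟩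
  exact lMap_ne_zero e hzero _ _ _ g hg

lemma layer_unique {p q : Σ i : J, ι i × ι i} {x : S}
    (hp : x ∈ layer e p) (hq : x ∈ layer e q) : p = q := by
  obtain ⟨i, α, β⟩ := p
  obtain ⟨j, γ, δ⟩ := q
  obtain ⟨g, hg⟩ := hp
  obtain ⟨h, hh⟩ := hq
  have heq : lMap e i α β g = lMap e j γ δ h := by rw [hg, hh]
  exact elem_inj (e.symm.injective heq)

lemma exists_layer {s : S} (hzero : e 0 = 0) (hs : s ≠ 0) :
    ∃ p : Σ i : J, ι i × ι i, s ∈ layer e p := by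
  cases he : (e s) with
  | none =>
    exfalso
    apply hs
    have h2 := congrArg e.symm he
    rw [e.symm_apply_apply] at h2
    rw [h2]
    exact symm_zero e hzero
  | some v =>
    obtain ⟨j, γ, g, δ⟩ := v
    exact ⟨⟨j, (γ, δ)⟩, g, (congrArg e.symm he.symm).trans (e.symm_apply_apply s)⟩

variable (hmul : ∀ x y : S, e (x * y) = e x * e y) (hzero : e 0 = 0)

include hmul hzero

lemma lMap_mul_same (i : J) (α β δ : ι i) (a b : G i) :
    lMap e i α β a * lMap e i β δ b = lMap e i α δ (a * b) := by
  apply e.injective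
  rw [hmul, lMap, lMap, lMap, e.apply_symm_apply, e.apply_symm_apply, e.apply_symm_apply]
  exact mul_same i α β δ a b

lemma lMap_mul_mismatch (i : J) (α β γ δ : ι i) (a b : G i) (h : β ≠ γ) :
    lMap e i α β a * lMap e i γ δ b = 0 := by
  apply e.injective
  rw [hmul, lMap, lMap, e.apply_symm_apply, e.apply_symm_apply, hzero]
  exact mul_mismatch i α β γ δ a b h

lemma lMap_mul_mismatch' {i j : J} (h : i ≠ j) (α β : ι i) (γ δ : ι j) (a : G i) (b : G j) :
    lMap e i α β a * lMap e j γ δ b = 0 := by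
  apply e.injective
  rw [hmul, lMap, lMap, e.apply_symm_apply, e.apply_symm_apply, hzero]
  exact mul_mismatch' h α β γ δ a b

omit hmul hzero

/-- The retraction associated with a layer. -/
def ret (e : S ≃ₜ OrthSum J ι G) (p : Σ i : J, ι i × ι i) : S → S :=
  fun s => lMap e p.1 p.2.1 p.2.1 1 * s * lMap e p.1 p.2.2 p.2.2 1

lemma ret_continuous (cmul : Continuous fun q : S × S => q.1 * q.2)
    (p : Σ i : J, ι i × ι i) : Continuous (ret e p) := by
  have h1 : Continuous fun s : S => lMap e p.1 p.2.1 p.2.1 1 * s :=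
    cmul.comp (continuous_const.prodMk continuous_id)
  exact cmul.comp (h1.prodMk continuous_const)

include hmul hzero

lemma ret_cases (p : Σ i : J, ι i × ι i) (s : S) :
    (s ∈ layer e p ∧ ret e p s = s) ∨ ret e p s = 0 := by
  obtain ⟨i, α, β⟩ := p
  cases he : (e s) with
  | none =>
    right
    have hs : s = 0 :=
      ((e.symm_apply_apply s).symm.trans (congrArg e.symm he)).trans (symm_zero e hzero)
    rw [hs]
    show _ * (0 : S) * _ = 0
    rw [mul_zero, zero_mul]
  | some v =>
    obtain ⟨j, γ, g, δ⟩ := v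
    have hs : s = lMap e j γ δ g :=
      (e.symm_apply_apply s).symm.trans (congrArg e.symm he)
    by_cases hij : i = j
    · subst hij
      by_cases hα : α = γ
      · subst hα
        by_cases hβ : δ = β
        · subst hβ
          left
          refine ⟨⟨g, hs.symm⟩, ?_⟩
          show lMap e i α α 1 * s * lMap e i δ δ 1 = s
          rw [hs, lMap_mul_same e hmul hzero, one_mul, lMap_mul_same e hmul hzero, mul_one]
        · right
          show lMap e i α α 1 * s * lMap e i β β 1 = 0
          rw [hs, lMap_mul_same e hmul hzero, lMap_mul_mismatch e hmul hzero i α δ β β _ _ hβ]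
      · right
        show lMap e i α α 1 * s * lMap e i β β 1 = 0
        rw [hs, lMap_mul_mismatch e hmul hzero i α α γ δ _ _ hα, zero_mul]
    · right
      show lMap e i α α 1 * s * lMap e i β β 1 = 0
      rw [hs, lMap_mul_mismatch' e hmul hzero hij, zero_mul]

lemma ret_eq_self_of_mem {p : Σ i : J, ι i × ι i} {s : S} (hs : s ∈ layer e p) :
    ret e p s = s := by
  rcases ret_cases e hmul hzero p s with ⟨-, h⟩ | h
  · exact h
  · exfalso
    obtain ⟨i, α, β⟩ := p
    obtain ⟨g, hg⟩ := hs
    rw [← hg] at h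
    have h' : lMap e i α α 1 * lMap e i α β g * lMap e i β β 1 = 0 := h
    rw [lMap_mul_same e hmul hzero, one_mul, lMap_mul_same e hmul hzero, mul_one] at h'
    rename' h' => h
    exact lMap_ne_zero e hzero i α β g h

lemma layer_eq_preimage (p : Σ i : J, ι i × ι i) :
    layer e p = ret e p ⁻¹' ({(0 : S)}ᶜ) := by
  ext s
  constructor
  · intro hs
    have h1 : ret e p s = s := ret_eq_self_of_mem e hmul hzero hs
    simp only [Set.mem_preimage, Set.mem_compl_iff, Set.mem_singleton_iff, h1]
    rintro rfl
    exact zero_not_mem_layer e hzero p hs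
  · intro hs
    rcases ret_cases e hmul hzero p s with ⟨h, -⟩ | h
    · exact h
    · exact absurd h hs

lemma layer_isOpen (cmul : Continuous fun q : S × S => q.1 * q.2)
    (p : Σ i : J, ι i × ι i) : IsOpen (layer e p) := by
  rw [layer_eq_preimage e hmul hzero p]
  exact (isClosed_singleton.isOpen_compl).preimage (ret_continuous e cmul p)

lemma zero_not_mem_closure_layer (cmul : Continuous fun q : S × S => q.1 * q.2)
    {inv : S → S} (hinv : IsInverseSemigroup S inv) (hinvc : Continuous inv)
    (p : Σ i : J, ι i × ι i) : (0 : S) ∉ closure (layer e p) := by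
  obtain ⟨i, α, β⟩ := p
  intro h0
  have hinv0 : inv 0 = 0 := by
    have := hinv.inv_unique 0 0 (by rw [mul_zero]) (by rw [mul_zero])
    exact this.symm
  have hinvel : ∀ g : G i, inv (lMap e i α β g) = lMap e i β α g⁻¹ := by
    intro g
    refine (hinv.inv_unique _ _ ?_ ?_).symm
    · rw [lMap_mul_same e hmul hzero, lMap_mul_same e hmul hzero]
      congr 1
      group
    · rw [lMap_mul_same e hmul hzero, lMap_mul_same e hmul hzero]
      congr 1
      group
  set q : S → S := fun y => y * inv y with hq
  have hqc : Continuous q := cmul.comp (continuous_id.prodMk hinvc)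
  have himg : q '' (layer e ⟨i, (α, β)⟩) ⊆ {lMap e i α α 1} := by
    rintro - ⟨-, ⟨g, rfl⟩, rfl⟩
    show q (lMap e i α β g) ∈ _
    have : q (lMap e i α β g) = lMap e i α β g * inv (lMap e i α β g) := rfl
    rw [this, hinvel g, lMap_mul_same e hmul hzero]
    simp
  have h1 : q 0 ∈ closure (q '' (layer e ⟨i, (α, β)⟩)) :=
    image_closure_subset_closure_image hqc ⟨0, h0, rfl⟩
  have h2 : q 0 ∈ closure {lMap e i α α 1} := closure_mono himg h1
  rw [closure_singleton] at h2
  have h3 : q 0 = 0 := zero_mul (inv 0)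
  rw [h3] at h2
  exact lMap_ne_zero e hzero i α α 1 h2.symm

lemma layer_isClosed (cmul : Continuous fun q : S × S => q.1 * q.2)
    {inv : S → S} (hinv : IsInverseSemigroup S inv) (hinvc : Continuous inv)
    (p : Σ i : J, ι i × ι i) : IsClosed (layer e p) := by
  rw [← closure_subset_iff_isClosed]
  intro s hs
  have hr : ret e p s ∈ closure (layer e p) := by
    have h1 : ret e p s ∈ ret e p '' closure (layer e p) := ⟨s, hs, rfl⟩
    have h2 := image_closure_subset_closure_image (ret_continuous e cmul p) h1
    refine closure_mono ?_ h2
    rintro - ⟨x, hx, rfl⟩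
    rw [ret_eq_self_of_mem e hmul hzero hx]
    exact hx
  rcases ret_cases e hmul hzero p s with ⟨h, -⟩ | h
  · exact h
  · rw [h] at hr
    exact absurd hr (zero_not_mem_closure_layer e hmul hzero cmul hinv hinvc p)

end Main

end OrthAux

namespace OrthAux

section Main2

variable {S : Type*} [SemigroupWithZero S] [TopologicalSpace S] [T2Space S]
variable {J : Type*} {ι : J → Type*} {G : J → Type*}
variable [∀ i, Group (G i)] [∀ i, TopologicalSpace (G i)] [∀ i, IsTopologicalGroup (G i)]
variable [TopologicalSpace (OrthSum J ι G)]
variable (e : S ≃ₜ OrthSum J ι G)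
variable (hmul : ∀ x y : S, e (x * y) = e x * e y) (hzero : e 0 = 0)

include hmul hzero

lemma inv_lMap {inv : S → S} (hinv : IsInverseSemigroup S inv) (i : J) (α β : ι i) (g : G i) :
    inv (lMap e i α β g) = lMap e i β α g⁻¹ := by
  refine (hinv.inv_unique _ _ ?_ ?_).symm
  · rw [lMap_mul_same e hmul hzero, lMap_mul_same e hmul hzero]
    congr 1
    group
  · rw [lMap_mul_same e hmul hzero, lMap_mul_same e hmul hzero]
    congr 1
    group

omit hmul hzero

lemma inv_zero {inv : S → S} (hinv : IsInverseSemigroup S inv) : inv (0 : S) = 0 :=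
  (hinv.inv_unique 0 0 (by rw [mul_zero]) (by rw [mul_zero])).symm

include hmul hzero

/-- Pseudocompactness: only finitely many layers fail to have dense trace of `V`. -/
lemma feeble (hpc : IsPseudocompact S)
    (cmul : Continuous fun q : S × S => q.1 * q.2)
    {V : Set S} (hV : IsOpen V) (h0 : (0 : S) ∈ V) :
    {p : Σ i : J, ι i × ι i | ¬ layer e p ⊆ closure (V ∩ layer e p)}.Finite := by
  classical
  set Bp := {p : Σ i : J, ι i × ι i | ¬ layer e p ⊆ closure (V ∩ layer e p)} with hBp
  set F : (Σ i : J, ι i × ι i) → Set S := fun p => layer e p \ closure (V ∩ layer e p) with hF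
  have hFopen : ∀ p, IsOpen (F p) :=
    fun p => (layer_isOpen e hmul hzero cmul p).sdiff isClosed_closure
  have hFsub : ∀ p, F p ⊆ layer e p := fun p => Set.diff_subset
  have hFne : ∀ p ∈ Bp, (F p).Nonempty := by
    intro p hp
    rw [hBp, Set.mem_setOf_eq, Set.not_subset] at hp
    obtain ⟨x, hx1, hx2⟩ := hp
    exact ⟨x, hx1, hx2⟩
  have hloc : LocallyFinite (fun U : ↥(F '' Bp) => (U : Set S)) := by
    intro s
    by_cases hs : s = 0
    · refine ⟨V, hV.mem_nhds (hs ▸ h0), ?_⟩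
      have hempty : {u : ↥(F '' Bp) | ((u : Set S) ∩ V).Nonempty} = ∅ := by
        ext u
        simp only [Set.mem_setOf_eq, Set.mem_empty_iff_false, iff_false]
        rintro ⟨z, hz1, hz2⟩
        obtain ⟨p, -, hFp⟩ := u.2
        rw [← hFp] at hz1
        exact hz1.2 (subset_closure ⟨hz2, hz1.1⟩)
      rw [hempty]
      exact Set.finite_empty
    · obtain ⟨q, hq⟩ := exists_layer e hzero hs
      refine ⟨layer e q, (layer_isOpen e hmul hzero cmul q).mem_nhds hq, ?_⟩
      apply Set.Subsingleton.finite
      rintro u hu u' hu'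
      obtain ⟨p, -, hFp⟩ := u.2
      obtain ⟨p', -, hFp'⟩ := u'.2
      obtain ⟨z, hz1, hz2⟩ := hu
      obtain ⟨z', hz1', hz2'⟩ := hu'
      have hzF : z ∈ F p := by rw [hFp]; exact hz1
      have hzF' : z' ∈ F p' := by rw [hFp']; exact hz1'
      have hpq : p = q := layer_unique e (hFsub p hzF) hz2
      have hpq' : p' = q := layer_unique e (hFsub p' hzF') hz2'
      have h1 : (u : Set S) = F q := by rw [← hpq]; exact hFp.symm
      have h2 : (u' : Set S) = F q := by rw [← hpq']; exact hFp'.symm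
      exact Subtype.ext (h1.trans h2.symm)
  have hfin : (F '' Bp).Finite := by
    apply hpc (F '' Bp) ?_ hloc
    rintro U ⟨p, hp, rfl⟩
    exact ⟨hFopen p, hFne p hp⟩
  apply Set.Finite.of_finite_image hfin
  intro p hp q hq hpq
  obtain ⟨z, hz⟩ := hFne p hp
  have hzq : z ∈ F q := hpq ▸ hz
  exact layer_unique e (hFsub p hz) (hFsub q hzq)

omit hmul hzero

/-- In a topological group, a dense open set satisfies `D * D⁻¹ * D = G`. -/
lemma dense_trick {H : Type*} [Group H] [TopologicalSpace H] [IsTopologicalGroup H]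
    {D : Set H} (hD : Dense D) (hDo : IsOpen D) (t : H) :
    ∃ a ∈ D, ∃ b ∈ D, ∃ c ∈ D, a * b⁻¹ * c = t := by
  obtain ⟨c, hc⟩ := hD.nonempty
  have himg : Dense ((fun b => t * c⁻¹ * b) '' D) := by
    rw [dense_iff_closure_eq] at hD ⊢
    have h1 : (fun b => t * c⁻¹ * b) '' closure D = closure ((fun b => t * c⁻¹ * b) '' D) :=
      (Homeomorph.mulLeft (t * c⁻¹)).image_closure D
    rw [hD, Set.image_univ] at h1
    rw [← h1]
    exact (Set.range_eq_univ.2 (Homeomorph.mulLeft (t * c⁻¹)).surjective)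
  obtain ⟨z, hzD, hzimg⟩ := himg.inter_open_nonempty D hDo ⟨c, hc⟩
  obtain ⟨b, hbD, rfl⟩ := hzimg
  exact ⟨t * c⁻¹ * b, hzD, b, hbD, c, hc, by group⟩

include hmul hzero

/-- The key consequence of pseudocompactness: every open neighbourhood of `0`
contains all but finitely many layers. -/
lemma star (hpc : IsPseudocompact S)
    (cmul : Continuous fun q : S × S => q.1 * q.2)
    {inv : S → S} (hinv : IsInverseSemigroup S inv) (hinvc : Continuous inv)
    (hembed : ∀ (i : J) (α β : ι i),
      Topology.IsEmbedding fun g : G i => e.symm (OrthSum.elem i α g β))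
    {U : Set S} (hU : IsOpen U) (h0 : (0 : S) ∈ U) :
    {p : Σ i : J, ι i × ι i | ¬ layer e p ⊆ U}.Finite := by
  -- first get V with V * V⁻¹ * V ⊆ U
  have hc3 : Continuous (fun t : S × S × S => t.1 * inv t.2.1 * t.2.2) := by
    have h1 : Continuous fun t : S × S × S => t.1 * inv t.2.1 :=
      cmul.comp (continuous_fst.prodMk (hinvc.comp (continuous_fst.comp continuous_snd)))
    exact cmul.comp (h1.prodMk (continuous_snd.comp continuous_snd))
  have hval : (fun t : S × S × S => t.1 * inv t.2.1 * t.2.2) (0, 0, 0) = 0 := by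
    show (0 : S) * inv 0 * 0 = 0
    rw [mul_zero]
  have hpre : IsOpen ((fun t : S × S × S => t.1 * inv t.2.1 * t.2.2) ⁻¹' U) :=
    hU.preimage hc3
  have hmem : ((0 : S), (0 : S), (0 : S)) ∈ (fun t : S × S × S => t.1 * inv t.2.1 * t.2.2) ⁻¹' U := by
    show (0 : S) * inv 0 * 0 ∈ U
    rw [mul_zero]; exact h0
  obtain ⟨V₁, W, hV₁, hW, h0V₁, h0W, hsub⟩ := isOpen_prod_iff.1 hpre 0 (0, 0) hmem
  obtain ⟨V₂, V₃, hV₂, hV₃, h0V₂, h0V₃, hsub'⟩ := isOpen_prod_iff.1 hW 0 0 h0W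
  set V : Set S := V₁ ∩ V₂ ∩ V₃ with hV
  have hVopen : IsOpen V := (hV₁.inter hV₂).inter hV₃
  have hV0 : (0 : S) ∈ V := ⟨⟨h0V₁, h0V₂⟩, h0V₃⟩
  have hVmul : ∀ a ∈ V, ∀ b ∈ V, ∀ c ∈ V, a * inv b * c ∈ U := by
    intro a ha b hb c hc
    exact hsub (Set.mk_mem_prod ha.1.1 (hsub' (Set.mk_mem_prod hb.1.2 hc.2)))
  refine (feeble e hmul hzero hpc cmul hVopen hV0).subset ?_
  intro p hp
  simp only [Set.mem_setOf_eq] at hp ⊢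
  intro hdense
  apply hp
  obtain ⟨i, α, β⟩ := p
  set φ : G i → S := lMap e i α β with hφdef
  have hφ : Topology.IsEmbedding φ := hembed i α β
  have hDo : IsOpen (φ ⁻¹' V) := hVopen.preimage hφ.continuous
  have hD : Dense (φ ⁻¹' V) := by
    intro g
    rw [hφ.closure_eq_preimage_closure_image (φ ⁻¹' V), Set.mem_preimage,
      Set.image_preimage_eq_inter_range]
    have : φ g ∈ closure (V ∩ layer e ⟨i, (α, β)⟩) := hdense ⟨g, rfl⟩
    exact this
  rintro x ⟨g, rfl⟩
  obtain ⟨a, ha, b, hb, c, hc, habc⟩ := dense_trick hD hDo g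
  have hkey : φ g = φ a * inv (φ b) * φ c := by
    show lMap e i α β g = lMap e i α β a * inv (lMap e i α β b) * lMap e i α β c
    rw [inv_lMap e hmul hzero hinv, lMap_mul_same e hmul hzero, lMap_mul_same e hmul hzero, habc]
  rw [show lMap e i α β g = φ g from rfl, hkey]
  exact hVmul _ ha _ hb _ hc

/-- Clopen neighbourhood base at zero. -/
lemma clopen_base (hpc : IsPseudocompact S)
    (cmul : Continuous fun q : S × S => q.1 * q.2)
    {inv : S → S} (hinv : IsInverseSemigroup S inv) (hinvc : Continuous inv)
    (hembed : ∀ (i : J) (α β : ι i),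
      Topology.IsEmbedding fun g : G i => e.symm (OrthSum.elem i α g β))
    {U : Set S} (hU : IsOpen U) (h0 : (0 : S) ∈ U) :
    ∃ O : Set S, IsClopen O ∧ (0 : S) ∈ O ∧ O ⊆ U := by
  set Bad := {p : Σ i : J, ι i × ι i | ¬ layer e p ⊆ U} with hBad
  have hBadfin : Bad.Finite := star e hmul hzero hpc cmul hinv hinvc hembed hU h0
  refine ⟨(⋃ p ∈ Bad, layer e p)ᶜ, ⟨?_, ?_⟩, ?_, ?_⟩
  · exact (isOpen_biUnion fun p _ => layer_isOpen e hmul hzero cmul p).isClosed_compl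
  · exact (hBadfin.isClosed_biUnion fun p _ => layer_isClosed e hmul hzero cmul hinv hinvc p).isOpen_compl
  · simp only [Set.mem_compl_iff, Set.mem_iUnion]
    rintro ⟨p, -, hp⟩
    exact zero_not_mem_layer e hzero p hp
  · intro s hs
    by_cases h : s = 0
    · rw [h]; exact h0
    · obtain ⟨p, hp⟩ := exists_layer e hzero h
      by_cases hpBad : p ∈ Bad
      · exfalso
        apply hs
        exact Set.mem_biUnion hpBad hp
      · rw [hBad, Set.mem_setOf_eq, not_not] at hpBad
        exact hpBad hp

end Main2

end OrthAux

namespace OrthAux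

/-- Gluing continuity along a clopen set. -/
lemma clopen_glue {X Y : Type*} [TopologicalSpace X] [TopologicalSpace Y] {s : Set X}
    (hs : IsClopen s) {f : X → Y} (h1 : ContinuousOn f s) (h2 : ContinuousOn f sᶜ) :
    Continuous f := by
  rw [continuous_iff_continuousAt]
  intro x
  by_cases hx : x ∈ s
  · exact h1.continuousAt (hs.isOpen.mem_nhds hx)
  · exact h2.continuousAt (hs.isClosed.isOpen_compl.mem_nhds hx)

/-- A space which embeds into a `T₃.₅` space is `T₃.₅`. -/
lemma embedding_t35 {X Y : Type*} [TopologicalSpace X] [TopologicalSpace Y] [T35Space Y]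
    {f : X → Y} (hf : Topology.IsEmbedding f) : T35Space X := by
  haveI ht1 : T1Space X := hf.t1Space
  have hcr : CompletelyRegularSpace X := by
    refine ⟨?_⟩
    intro x K hK hxK
    have hx : f x ∉ closure (f '' K) := by
      intro hmem
      have hxcl : x ∈ closure K := by
        rw [hf.closure_eq_preimage_closure_image K]
        exact hmem
      rw [hK.closure_eq] at hxcl
      exact hxK hxcl
    obtain ⟨g, hgc, hg0, hg1⟩ :=
      CompletelyRegularSpace.completely_regular (f x) (closure (f '' K)) isClosed_closure hx
    exact ⟨g ∘ f, hgc.comp hf.continuous, hg0, fun y hy => hg1 (subset_closure ⟨y, hy, rfl⟩)⟩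
  exact { toT0Space := inferInstance, toCompletelyRegularSpace := hcr }

section Main3

variable {S : Type*} [SemigroupWithZero S] [TopologicalSpace S] [T2Space S]
variable {J : Type*} {ι : J → Type*} {G : J → Type*}
variable [∀ i, Group (G i)] [∀ i, TopologicalSpace (G i)] [∀ i, IsTopologicalGroup (G i)]
variable [TopologicalSpace (OrthSum J ι G)]

theorem aux_t35 (cmul : Continuous fun q : S × S => q.1 * q.2)
    {inv : S → S} (hinv : IsInverseSemigroup S inv) (hinvc : Continuous inv)
    (hpc : IsPseudocompact S)
    (e : S ≃ₜ OrthSum J ι G)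
    (hmul : ∀ x y : S, e (x * y) = e x * e y) (hzero : e 0 = 0)
    (hembed : ∀ (i : J) (α β : ι i),
      Topology.IsEmbedding fun g : G i => e.symm (OrthSum.elem i α g β)) :
    T35Space S := by
  classical
  have hcr : CompletelyRegularSpace S := by
    refine ⟨?_⟩
    intro x K hK hxK
    by_cases hx0 : x = 0
    · -- separate 0 from the closed set K using a clopen neighbourhood
      subst hx0
      obtain ⟨O, hOclopen, hO0, hOU⟩ := clopen_base e hmul hzero hpc cmul hinv hinvc hembed
        hK.isOpen_compl hxK
      refine ⟨fun s => if s ∈ O then 0 else 1, ?_, by simp [hO0], ?_⟩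
      · apply clopen_glue hOclopen
        · apply ContinuousOn.congr (continuousOn_const (c := (0 : unitInterval)))
          intro s hs
          simp [hs]
        · apply ContinuousOn.congr (continuousOn_const (c := (1 : unitInterval)))
          intro s hs
          exact if_neg hs
      · intro y hy
        have hyO : y ∉ O := fun h => (hOU h) hy
        show (if y ∈ O then (0 : unitInterval) else 1) = 1
        rw [if_neg hyO]
    · -- x lies in some layer
      obtain ⟨p, hp⟩ := exists_layer e hzero hx0
      obtain ⟨i, α, β⟩ := p
      set φ : G i → S := lMap e i α β with hφdef
      have hφ : Topology.IsEmbedding φ := hembed i α β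
      have hrange : Set.range φ = layer e ⟨i, (α, β)⟩ := rfl
      have hclopen : IsClopen (Set.range φ) := by
        rw [hrange]
        exact ⟨layer_isClosed e hmul hzero cmul hinv hinvc _,
          layer_isOpen e hmul hzero cmul _⟩
      -- inverse of the embedding onto its range
      set ρ : Set.range φ → G i := ⇑(Equiv.ofInjective φ hφ.injective).symm with hρdef
      have hρφ : ∀ s : Set.range φ, φ (ρ s) = s := fun s =>
        Equiv.apply_ofInjective_symm hφ.injective s
      have hρcont : Continuous ρ := by
        rw [hφ.toIsInducing.continuous_iff]
        have hfun : φ ∘ ρ = Subtype.val := funext fun s => hρφ s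
        rw [hfun]
        exact continuous_subtype_val
      -- complete regularity of the group
      haveI : CompletelyRegularSpace (G i) := TopologicalGroup.completelyRegularSpace (G i)
      obtain ⟨g₀, hg₀⟩ := hp
      have hg₀A : g₀ ∉ φ ⁻¹' K := by
        intro h
        apply hxK
        have : φ g₀ ∈ K := h
        rwa [show φ g₀ = x from hg₀] at this
      obtain ⟨f₀, hf₀c, hf₀0, hf₀1⟩ := CompletelyRegularSpace.completely_regular g₀ (φ ⁻¹' K)
        (hK.preimage hφ.continuous) hg₀A
      -- glue
      set F : S → unitInterval := fun s => if h : s ∈ Set.range φ then f₀ (ρ ⟨s, h⟩) else 1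
        with hFdef
      have hFcont : Continuous F := by
        apply clopen_glue hclopen
        · rw [continuousOn_iff_continuous_restrict]
          have hres : (Set.range φ).domRestrict F = fun s : Set.range φ => f₀ (ρ s) := by
            funext s
            show F s.1 = f₀ (ρ s)
            rw [hFdef]
            simp only
            rw [dif_pos s.2]
          rw [hres]
          exact hf₀c.comp hρcont
        · apply ContinuousOn.congr (continuousOn_const (c := (1 : unitInterval)))
          intro s hs
          rw [hFdef]
          simp only
          exact dif_neg hs
      refine ⟨F, hFcont, ?_, ?_⟩
      · have hxr : x ∈ Set.range φ := ⟨g₀, hg₀⟩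
        rw [hFdef]
        simp only
        rw [dif_pos hxr]
        have : ρ ⟨x, hxr⟩ = g₀ := by
          apply hφ.injective
          rw [hρφ ⟨x, hxr⟩]
          exact hg₀.symm
        rw [this, hf₀0]
      · intro y hy
        rw [hFdef]
        simp only
        by_cases hyr : y ∈ Set.range φ
        · rw [dif_pos hyr]
          have : ρ ⟨y, hyr⟩ ∈ φ ⁻¹' K := by
            show φ (ρ ⟨y, hyr⟩) ∈ K
            rw [hρφ ⟨y, hyr⟩]
            exact hy
          exact hf₀1 this
        · rw [dif_neg hyr]
          rfl
  exact { toT0Space := inferInstance, toCompletelyRegularSpace := hcr }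

end Main3

end OrthAux

/-- Let `S` be a primitive Hausdorff pseudocompact topological
inverse semigroup, topologically isomorphic to the orthogonal sum of
topological Brandt `λ i`-extensions of topological groups `G i`. Then `S` is a
Tychonoff space iff for every `i` the space of the topological group `G i` is
Tychonoff. -/
theorem tychonoff_iff_groups_tychonoff
    {S : Type*} [SemigroupWithZero S] [TopologicalSpace S] [T2Space S]
    (continuous_mul : Continuous fun p : S × S => p.1 * p.2)
    (inv : S → S) (hinv : IsInverseSemigroup S inv) (hinvc : Continuous inv)
    (hnt : Nontrivial S) (hprim : IsPrimitiveInverse S)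
    (hpc : IsPseudocompact S)
    (d : TopBrandtDecomposition S) :
    T35Space S ↔ ∀ i : d.I, @T35Space (d.G i) (d.instTopG i) := by
  classical
  letI := d.instNonempty
  letI := d.instGroup
  letI := d.instTopG
  letI := d.instTopGrpG
  letI := d.instTopSum
  have h35 : T35Space S :=
    OrthAux.aux_t35 continuous_mul hinv hinvc hpc d.e d.map_mul d.map_zero d.embed
  constructor
  · intro _ i
    exact OrthAux.embedding_t35
      (d.embed i (Classical.arbitrary (d.ι i)) (Classical.arbitrary (d.ι i)))
  · intro _
    exact h35
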